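/- Let (S_n, d_n), n ∈ ℕ, be a sequence of countable metric spaces, p ∈ [1, +∞), and let (S̄_n, d̄_n) denote the completion of (S_n, d_n). Then E((S̄_n)_{n∈ℕ}; p) and E((S_n)_{n∈ℕ}; p) are Borel bireducible. -/

import Mathlib

open UniformSpace Metric Set Function

section Aux

variable {α : Type*} [MetricSpace α]

private lemma exists_close (e : ℕ → α) (he : Surjective e) {ε : ℝ} (hε : 0 < ε)
    (z : Completion α) : ∃ k, dist ((e k : Completion α)) z < ε := by
  obtain ⟨a, ha⟩ := (Completion.denseRange_coe (α := α)).exists_dist_lt z hε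
  obtain ⟨k, rfl⟩ := he a
  exact ⟨k, by rwa [dist_comm]⟩

private noncomputable def sel (e : ℕ → α) (he : Surjective e) {ε : ℝ} (hε : 0 < ε)
    (z : Completion α) : α :=
  e (Nat.find (exists_close e he hε z))

private lemma sel_dist (e : ℕ → α) (he : Surjective e) {ε : ℝ} (hε : 0 < ε) (z : Completion α) :
    dist ((sel e he hε z : α) : Completion α) z < ε :=
  Nat.find_spec (exists_close e he hε z)

private lemma measurable_sel [Countable α] (e : ℕ → α) (he : Surjective e) {ε : ℝ} (hε : 0 < ε) :
    @Measurable (Completion α) α (borel _) (borel _) (sel e he hε) := by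
  letI : MeasurableSpace (Completion α) := borel _
  haveI : BorelSpace (Completion α) := ⟨rfl⟩
  letI : MeasurableSpace α := borel α
  apply measurable_to_countable'
  intro s
  have hmb : ∀ j : ℕ, MeasurableSet {z : Completion α | dist ((e j : Completion α)) z < ε} :=
    fun j => (isOpen_lt (continuous_const.dist continuous_id) continuous_const).measurableSet
  have h1 : sel e he hε ⁻¹' {s} = ⋃ k ∈ {k : ℕ | e k = s},
      {z : Completion α | Nat.find (exists_close e he hε z) = k} := by
    ext z
    simp only [mem_preimage, mem_singleton_iff, mem_iUnion, mem_setOf_eq, sel, exists_prop]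
    constructor
    · intro h; exact ⟨_, h, rfl⟩
    · rintro ⟨k, hk, h⟩; rw [h]; exact hk
  rw [h1]
  refine MeasurableSet.biUnion (to_countable _) fun k _ => ?_
  have h2 : {z : Completion α | Nat.find (exists_close e he hε z) = k} =
      {z : Completion α | dist ((e k : Completion α)) z < ε} ∩
        ⋂ j, ⋂ _ : j < k, {z : Completion α | dist ((e j : Completion α)) z < ε}ᶜ := by
    ext z
    simp only [mem_inter_iff, mem_iInter, mem_setOf_eq, mem_compl_iff, Nat.find_eq_iff]
  rw [h2]
  exact (hmb k).inter (MeasurableSet.iInter fun j => MeasurableSet.iInter fun _ => (hmb j).compl)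

private lemma rpow_add_le {b c p : ℝ} (hb : 0 ≤ b) (hc : 0 ≤ c) (hp : 0 ≤ p) :
    (b + c) ^ p ≤ 2 ^ p * (b ^ p + c ^ p) := by
  have h1 : b + c ≤ 2 * max b c := by
    rcases le_total b c with h | h
    · rw [max_eq_right h]; linarith
    · rw [max_eq_left h]; linarith
  calc (b + c) ^ p ≤ (2 * max b c) ^ p :=
        Real.rpow_le_rpow (by positivity) h1 hp
    _ = 2 ^ p * (max b c) ^ p := Real.mul_rpow (by norm_num) (le_max_of_le_left hb)
    _ ≤ 2 ^ p * (b ^ p + c ^ p) := by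
        have : (max b c) ^ p ≤ b ^ p + c ^ p := by
          rcases le_total b c with h | h
          · rw [max_eq_right h]
            have := Real.rpow_nonneg hb p; linarith
          · rw [max_eq_left h]
            have := Real.rpow_nonneg hc p; linarith
        have h2 : (0:ℝ) ≤ 2 ^ p := Real.rpow_nonneg (by norm_num) p
        nlinarith

private lemma summable_of_le_add {p : ℝ} (hp : 1 ≤ p) {a b c : ℕ → ℝ} (ha : ∀ n, 0 ≤ a n)
    (hb : ∀ n, 0 ≤ b n) (hc : ∀ n, 0 ≤ c n) (hab : ∀ n, a n ≤ b n + c n)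
    (hsb : Summable fun n => b n ^ p) (hsc : Summable fun n => c n ^ p) :
    Summable fun n => a n ^ p := by
  refine Summable.of_nonneg_of_le (fun n => Real.rpow_nonneg (ha n) p)
    (fun n => ?_) ((hsb.add hsc).mul_left ((2:ℝ) ^ p))
  calc a n ^ p ≤ (b n + c n) ^ p := Real.rpow_le_rpow (ha n) (hab n) (by linarith)
    _ ≤ 2 ^ p * (b n ^ p + c n ^ p) := rpow_add_le (hb n) (hc n) (by linarith)

private lemma summable_c {p : ℝ} (hp : 1 ≤ p) :
    Summable fun n : ℕ => (2 * (1/2 : ℝ) ^ n) ^ p := by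
  have h0 : (0:ℝ) < p := by linarith
  have key : ∀ n : ℕ, (2 * (1/2 : ℝ) ^ n) ^ p = 2 ^ p * (((1/2 : ℝ) ^ p) ^ n) := by
    intro n
    rw [Real.mul_rpow (by norm_num) (by positivity), ← Real.rpow_natCast (1/2 : ℝ) n,
      ← Real.rpow_natCast ((1/2 : ℝ) ^ p) n, ← Real.rpow_mul (by norm_num),
      ← Real.rpow_mul (by norm_num), mul_comm (n:ℝ) p]
  simp only [key]
  exact (summable_geometric_of_lt_one (by positivity)
    (Real.rpow_lt_one (by norm_num) (by norm_num) h0)).mul_left _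

end Aux

/-- `E` is Borel reducible to `F` (w.r.t. the Borel σ-algebras of the topologies). -/
def BorelReducible {α β : Type*} [TopologicalSpace α] [TopologicalSpace β]
    (E : α → α → Prop) (F : β → β → Prop) : Prop :=
  ∃ θ : α → β, @Measurable α β (borel α) (borel β) θ ∧ ∀ x y, E x y ↔ F (θ x) (θ y)

/-- `E` and `F` are Borel bireducible. -/
def BorelBireducible {α β : Type*} [TopologicalSpace α] [TopologicalSpace β]
    (E : α → α → Prop) (F : β → β → Prop) : Prop :=
  BorelReducible E F ∧ BorelReducible F E

theorem stmt3
    {S : ℕ → Type*} [∀ n, MetricSpace (S n)] [∀ n, Countable (S n)]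
    (p : ℝ) (hp : 1 ≤ p) :
    BorelBireducible
      (fun x y : ∀ n, UniformSpace.Completion (S n) =>
        Summable fun n => dist (x n) (y n) ^ p)
      (fun x y : ∀ n, S n => Summable fun n => dist (x n) (y n) ^ p) := by
  by_cases hne : ∀ n, Nonempty (S n)
  · -- all spaces nonempty
    haveI := hne
    choose e he using fun n => exists_surjective_nat (S n)
    have hεpos : ∀ n : ℕ, (0:ℝ) < (1/2) ^ n := fun n => by positivity
    -- measurable space instances
    letI mC : ∀ n, MeasurableSpace (Completion (S n)) := fun n => borel _
    haveI bC : ∀ n, BorelSpace (Completion (S n)) := fun n => ⟨rfl⟩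
    letI mS : ∀ n, MeasurableSpace (S n) := fun n => borel _
    haveI bS : ∀ n, BorelSpace (S n) := fun n => ⟨rfl⟩
    haveI sC : ∀ n, TopologicalSpace.SeparableSpace (Completion (S n)) := fun n =>
      (Completion.denseRange_coe).separableSpace (Completion.continuous_coe _)
    haveI : ∀ n, SecondCountableTopology (Completion (S n)) := fun n =>
      UniformSpace.secondCountable_of_separable _
    haveI : ∀ n, SecondCountableTopology (S n) := fun n =>
      UniformSpace.secondCountable_of_separable _
    haveI pbC : BorelSpace (∀ n, Completion (S n)) := Pi.borelSpace
    haveI pbS : BorelSpace (∀ n, S n) := Pi.borelSpace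
    constructor
    · -- completion reduces to S
      refine ⟨fun x n => sel (e n) (he n) (hεpos n) (x n), ?_, ?_⟩
      · rw [← pbC.measurable_eq, ← pbS.measurable_eq]
        exact measurable_pi_lambda _ fun n =>
          (measurable_sel (e n) (he n) (hεpos n)).comp (measurable_pi_apply n)
      · intro x y
        have bound1 : ∀ n, dist (sel (e n) (he n) (hεpos n) (x n))
            (sel (e n) (he n) (hεpos n) (y n)) ≤ dist (x n) (y n) + 2 * (1/2) ^ n := by
          intro n
          rw [← Completion.dist_eq]
          calc dist ((sel (e n) (he n) (hεpos n) (x n) : S n) : Completion (S n))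
                ((sel (e n) (he n) (hεpos n) (y n) : S n) : Completion (S n))
              ≤ dist ((sel (e n) (he n) (hεpos n) (x n) : S n) : Completion (S n)) (x n)
                + dist (x n) (y n)
                + dist (y n) ((sel (e n) (he n) (hεpos n) (y n) : S n) : Completion (S n)) :=
              dist_triangle4 _ _ _ _
            _ ≤ dist (x n) (y n) + 2 * (1/2) ^ n := by
                have h1 := sel_dist (e n) (he n) (hεpos n) (x n)
                have h2 := sel_dist (e n) (he n) (hεpos n) (y n)
                rw [dist_comm (y n)]
                linarith
        have bound2 : ∀ n, dist (x n) (y n) ≤ dist (sel (e n) (he n) (hεpos n) (x n))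
            (sel (e n) (he n) (hεpos n) (y n)) + 2 * (1/2) ^ n := by
          intro n
          rw [← Completion.dist_eq (α := S n)]
          calc dist (x n) (y n)
              ≤ dist (x n) ((sel (e n) (he n) (hεpos n) (x n) : S n) : Completion (S n))
                + dist ((sel (e n) (he n) (hεpos n) (x n) : S n) : Completion (S n))
                  ((sel (e n) (he n) (hεpos n) (y n) : S n) : Completion (S n))
                + dist ((sel (e n) (he n) (hεpos n) (y n) : S n) : Completion (S n)) (y n) :=
              dist_triangle4 _ _ _ _
            _ ≤ dist ((sel (e n) (he n) (hεpos n) (x n) : S n) : Completion (S n))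
                ((sel (e n) (he n) (hεpos n) (y n) : S n) : Completion (S n)) + 2 * (1/2) ^ n := by
                have h1 := sel_dist (e n) (he n) (hεpos n) (x n)
                have h2 := sel_dist (e n) (he n) (hεpos n) (y n)
                rw [dist_comm (x n)]
                linarith
        constructor
        · intro h
          exact summable_of_le_add hp (fun n => dist_nonneg) (fun n => dist_nonneg)
            (fun n => by positivity) bound1 h (summable_c hp)
        · intro h
          exact summable_of_le_add hp (fun n => dist_nonneg) (fun n => dist_nonneg)
            (fun n => by positivity) bound2 h (summable_c hp)
    · -- S reduces to completion
      refine ⟨fun x n => (x n : Completion (S n)), ?_, ?_⟩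
      · rw [← pbS.measurable_eq, ← pbC.measurable_eq]
        exact measurable_pi_lambda _ fun n =>
          (Completion.continuous_coe _).measurable.comp (measurable_pi_apply n)
      · intro x y
        simp only [Completion.dist_eq]
  · -- some space is empty
    push_neg at hne
    obtain ⟨n, hn⟩ := hne
    haveI hES : IsEmpty (S n) := hn
    haveI hEC : IsEmpty (Completion (S n)) := by
      constructor
      intro z
      obtain ⟨a, -⟩ := (Completion.denseRange_coe (α := S n)).exists_dist_lt z one_pos
      exact hES.false a
    haveI : IsEmpty (∀ m, Completion (S m)) := ⟨fun x => hEC.false (x n)⟩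
    haveI : IsEmpty (∀ m, S m) := ⟨fun x => hES.false (x n)⟩
    constructor
    · exact ⟨fun x => isEmptyElim x,
        @measurable_of_empty _ _ (borel _) (borel _) _ _, fun x => isEmptyElim x⟩
    · exact ⟨fun x => isEmptyElim x,
        @measurable_of_empty _ _ (borel _) (borel _) _ _, fun x => isEmptyElim x⟩
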